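/- (Weyl–van der Corput inequality) For any complex numbers a(n) defined for integers n in (a, b] and any positive integer Q, |Σ_{a<n≤b} a(n)|² ≤ (1 + (b−a)/Q) · Σ_{|q|≤Q} (1 − |q|/Q) · Σ_{a<n, n+q≤b} a(n+q)·conj(a(n)). -/

import Mathlib

open Finset

private lemma shift_sum (a b lo hi s : ℤ) (F : ℤ → ℂ)
    (hF : ∀ n, n ∉ Finset.Ioc a b → F n = 0)
    (h1 : lo + s ≤ a + 1) (h2 : b ≤ hi + s) :
    ∑ m ∈ Finset.Icc lo hi, F (m + s) = ∑ n ∈ Finset.Ioc a b, F n := by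
  have hmap : (Finset.Icc lo hi).map (addRightEmbedding s)
      = Finset.Icc (lo + s) (hi + s) := Finset.map_add_right_Icc lo hi s
  have : ∑ m ∈ Finset.Icc lo hi, F (m + s)
      = ∑ n ∈ Finset.Icc (lo + s) (hi + s), F n := by
    rw [← hmap, Finset.sum_map]; rfl
  rw [this]
  exact (Finset.sum_subset
    (fun x hx => by simp only [Finset.mem_Ioc, Finset.mem_Icc] at *; omega)
    (fun x _ hx => hF x hx)).symm

private lemma triangle_count (Q : ℕ) (h : ℤ → ℂ) :
    ∑ r ∈ Finset.Icc (1:ℤ) Q, ∑ s ∈ Finset.Icc (1:ℤ) Q, h (r - s) =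
      ∑ q ∈ Finset.Icc (-(Q:ℤ)) Q, ((Q:ℤ) - |q|).toNat • h q := by
  rw [Finset.sum_comm]
  have step1 : ∀ s ∈ Finset.Icc (1:ℤ) Q,
      ∑ r ∈ Finset.Icc (1:ℤ) Q, h (r - s)
        = ∑ q ∈ Finset.Icc (-(Q:ℤ)) Q,
            if 1 - q ≤ s ∧ s ≤ (Q:ℤ) - q then h q else 0 := by
    intro s hs
    simp only [Finset.mem_Icc] at hs
    have e1 : ∑ r ∈ Finset.Icc (1:ℤ) Q, h (r - s)
        = ∑ q ∈ Finset.Icc (1 - s) ((Q:ℤ) - s), h q := by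
      rw [show Finset.Icc (1-s) ((Q:ℤ)-s)
          = (Finset.Icc (1:ℤ) Q).map (addRightEmbedding (-s)) by
        rw [Finset.map_add_right_Icc]; congr 1]
      rw [Finset.sum_map]
      refine Finset.sum_congr rfl fun r _ => ?_
      congr 1
    rw [e1, show Finset.Icc (1-s) ((Q:ℤ)-s)
        = (Finset.Icc (-(Q:ℤ)) Q).filter (fun q => 1 - q ≤ s ∧ s ≤ (Q:ℤ) - q) by
      ext q; simp only [Finset.mem_Icc, Finset.mem_filter]; omega]
    rw [Finset.sum_filter]
  rw [Finset.sum_congr rfl step1, Finset.sum_comm]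
  refine Finset.sum_congr rfl fun q hq => ?_
  simp only [Finset.mem_Icc] at hq
  rw [Finset.sum_ite, Finset.sum_const, Finset.sum_const_zero, add_zero]
  congr 1
  rw [show (Finset.Icc (1:ℤ) Q).filter (fun s => 1 - q ≤ s ∧ s ≤ (Q:ℤ) - q)
      = Finset.Icc (max 1 (1-q)) (min (Q:ℤ) ((Q:ℤ) - q)) by
    ext x; simp only [Finset.mem_Icc, Finset.mem_filter]; omega]
  rw [Int.card_Icc]
  rcases abs_cases q with ⟨h1, _⟩ | ⟨h1, _⟩ <;> rw [h1] <;> omega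

theorem stmt12 (A B : ℝ) (c : ℤ → ℂ) (Q : ℕ) (hQ : 0 < Q) :
    ‖∑ n ∈ Finset.Ioc ⌊A⌋ ⌊B⌋, c n‖ ^ 2 ≤
      (1 + (B - A) / Q) *
        ∑ q ∈ Finset.Icc (-(Q : ℤ)) (Q : ℤ), (1 - |(q : ℝ)| / Q) *
          (∑ n ∈ (Finset.Ioc ⌊A⌋ ⌊B⌋).filter
              (fun n => n + q ∈ Finset.Ioc ⌊A⌋ ⌊B⌋),
            c (n + q) * (starRingEnd ℂ) (c n)).re := by
  set a := ⌊A⌋ with ha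
  set b := ⌊B⌋ with hb
  set I := Finset.Ioc a b with hI
  set T : ℤ → ℂ := fun q => ∑ n ∈ I.filter (fun n => n + q ∈ I),
      c (n + q) * (starRingEnd ℂ) (c n) with hT
  by_cases hab : b ≤ a
  · have hIe : I = ∅ := Finset.Ioc_eq_empty (not_lt.mpr hab)
    simp [hT, hIe]
  push_neg at hab
  set g : ℤ → ℂ := fun n => if n ∈ I then c n else 0 with hg
  have hg0 : ∀ n, n ∉ I → g n = 0 := fun n hn => if_neg hn
  set S := ∑ n ∈ I, c n with hS
  set M := Finset.Icc (a + 1 - Q) (b - 1) with hM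
  set f : ℤ → ℂ := fun m => ∑ r ∈ Finset.Icc (1:ℤ) Q, g (m + r) with hf
  have key : ∀ s ∈ Finset.Icc (1:ℤ) Q, ∀ F : ℤ → ℂ, (∀ n, n ∉ I → F n = 0) →
      ∑ m ∈ M, F (m + s) = ∑ n ∈ I, F n := by
    intro s hs F hF
    simp only [Finset.mem_Icc] at hs
    exact shift_sum a b _ _ s F hF (by omega) (by omega)
  -- sum of f over M equals Q * S
  have hQS : ∑ m ∈ M, f m = (Q : ℂ) * S := by
    rw [hf]
    rw [Finset.sum_comm]
    have : ∀ r ∈ Finset.Icc (1:ℤ) Q, ∑ m ∈ M, g (m + r) = S := by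
      intro r hr
      rw [key r hr g hg0]
      exact Finset.sum_congr rfl fun n hn => if_pos hn
    rw [Finset.sum_congr rfl this, Finset.sum_const, Int.card_Icc]
    have : ((Q:ℤ) + 1 - 1).toNat = Q := by omega
    rw [this, nsmul_eq_mul]
  -- expand |f m|^2
  have hTq : ∀ q : ℤ, ∑ n ∈ I, g (n + q) * (starRingEnd ℂ) (g n) = T q := by
    intro q
    simp only [hT]
    rw [Finset.sum_filter]
    refine Finset.sum_congr rfl fun n hn => ?_
    by_cases h : n + q ∈ I
    · simp only [hg, if_pos h, if_pos hn]
    · simp only [hg, if_neg h, if_pos hn, zero_mul, if_neg h]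
  have hinner : ∀ r ∈ Finset.Icc (1:ℤ) Q, ∀ s ∈ Finset.Icc (1:ℤ) Q,
      ∑ m ∈ M, g (m + r) * (starRingEnd ℂ) (g (m + s)) = T (r - s) := by
    intro r hr s hs
    have hF0 : ∀ n, n ∉ I → g (n + (r - s)) * (starRingEnd ℂ) (g n) = 0 := by
      intro n hn; rw [hg0 n hn, map_zero, mul_zero]
    calc ∑ m ∈ M, g (m + r) * (starRingEnd ℂ) (g (m + s))
        = ∑ m ∈ M, g ((m + s) + (r - s)) * (starRingEnd ℂ) (g (m + s)) := by
          refine Finset.sum_congr rfl fun m _ => ?_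
          congr 2
          ring
      _ = ∑ n ∈ I, g (n + (r - s)) * (starRingEnd ℂ) (g n) :=
          key s hs (fun n => g (n + (r - s)) * (starRingEnd ℂ) (g n)) hF0
      _ = T (r - s) := hTq (r - s)
  have hW : ∑ m ∈ M, f m * (starRingEnd ℂ) (f m)
      = ∑ q ∈ Finset.Icc (-(Q:ℤ)) Q, ((Q:ℤ) - |q|).toNat • T q := by
    have e1 : ∀ m, f m * (starRingEnd ℂ) (f m)
        = ∑ r ∈ Finset.Icc (1:ℤ) Q, ∑ s ∈ Finset.Icc (1:ℤ) Q,
            g (m + r) * (starRingEnd ℂ) (g (m + s)) := by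
      intro m
      rw [hf, map_sum, Finset.sum_mul_sum]
    rw [Finset.sum_congr rfl fun m _ => e1 m]
    rw [Finset.sum_comm]
    rw [Finset.sum_congr rfl fun r _ => Finset.sum_comm]
    rw [Finset.sum_congr rfl fun r hr =>
      Finset.sum_congr rfl fun s hs => hinner r hr s hs]
    exact triangle_count Q T
  -- real quantities
  set K : ℝ := ∑ q ∈ Finset.Icc (-(Q:ℤ)) Q, (((Q:ℤ) - |q|).toNat : ℝ) * (T q).re with hK
  have hsumsq : ∑ m ∈ M, ‖f m‖ ^ 2 = K := by
    have e : ∀ m, ‖f m‖ ^ 2 = (f m * (starRingEnd ℂ) (f m)).re := by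
      intro m
      rw [Complex.mul_conj, Complex.sq_norm, Complex.ofReal_re]
    rw [Finset.sum_congr rfl fun m _ => e m, ← Complex.re_sum, hW, Complex.re_sum, hK]
    refine Finset.sum_congr rfl fun q _ => ?_
    rw [nsmul_eq_mul, Complex.mul_re]
    simp
  have hKnonneg : 0 ≤ K := by
    rw [← hsumsq]
    exact Finset.sum_nonneg fun m _ => by positivity
  -- Cauchy-Schwarz
  have hCS : ‖∑ m ∈ M, f m‖ ^ 2 ≤ (M.card : ℝ) * K := by
    calc ‖∑ m ∈ M, f m‖ ^ 2 ≤ (∑ m ∈ M, ‖f m‖) ^ 2 := by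
          have := norm_sum_le M f
          have h0 : (0:ℝ) ≤ ‖∑ m ∈ M, f m‖ := norm_nonneg _
          nlinarith [Finset.sum_nonneg (fun m (_ : m ∈ M) => norm_nonneg (f m))]
      _ ≤ (M.card : ℝ) * ∑ m ∈ M, ‖f m‖ ^ 2 :=
          sq_sum_le_card_mul_sum_sq
      _ = (M.card : ℝ) * K := by rw [hsumsq]
  have hcard : (M.card : ℝ) = (b : ℝ) - a + Q - 1 := by
    have h1 : M.card = (b - a + (Q:ℤ) - 1).toNat := by rw [hM, Int.card_Icc]; omega
    have h2 : (0:ℤ) ≤ b - a + (Q:ℤ) - 1 := by omega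
    have h3 : (((b - a + (Q:ℤ) - 1).toNat : ℤ) : ℝ) = ((b:ℝ) - a + Q - 1) := by
      rw [Int.toNat_of_nonneg h2]; push_cast; ring
    rw [h1, ← h3, Int.cast_natCast]
  have habs : ‖∑ m ∈ M, f m‖ = (Q : ℝ) * ‖S‖ := by
    rw [hQS, norm_mul, Complex.norm_natCast]
  have hQ2 : ((Q:ℝ))^2 * ‖S‖ ^ 2 ≤ ((b : ℝ) - a + Q - 1) * K := by
    rw [← hcard]
    calc ((Q:ℝ))^2 * ‖S‖ ^ 2 = ((Q:ℝ) * ‖S‖) ^ 2 := by ring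
      _ = ‖∑ m ∈ M, f m‖ ^ 2 := by rw [habs]
      _ ≤ (M.card : ℝ) * K := hCS
  have hfloor : ((b : ℝ) - a + Q - 1) ≤ (Q:ℝ) + (B - A) := by
    have h1 : (b : ℝ) ≤ B := Int.floor_le B
    have h2 : A < (a : ℝ) + 1 := Int.lt_floor_add_one A
    linarith
  have hQ3 : ((Q:ℝ))^2 * ‖S‖ ^ 2 ≤ ((Q:ℝ) + (B - A)) * K :=
    le_trans hQ2 (mul_le_mul_of_nonneg_right hfloor hKnonneg)
  -- identify RHS
  have hQR : (0:ℝ) < Q := by exact_mod_cast hQ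
  have hRHS : (1 + (B - A) / Q) *
      (∑ q ∈ Finset.Icc (-(Q : ℤ)) (Q : ℤ), (1 - |(q : ℝ)| / Q) * (T q).re)
      = (((Q:ℝ) + (B - A)) * K) / (Q:ℝ)^2 := by
    have e : ∀ q ∈ Finset.Icc (-(Q : ℤ)) (Q : ℤ),
        (1 - |(q : ℝ)| / Q) * (T q).re
          = ((((Q:ℤ) - |q|).toNat : ℝ) * (T q).re) / Q := by
      intro q hq
      simp only [Finset.mem_Icc] at hq
      have h1 : (((Q:ℤ) - |q|).toNat : ℝ) = (Q:ℝ) - |(q : ℝ)| := by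
        have : (0:ℤ) ≤ (Q:ℤ) - |q| := by
          rcases abs_cases q with ⟨h1, _⟩ | ⟨h1, _⟩ <;> omega
        rw [← Int.cast_natCast, Int.toNat_of_nonneg this]
        push_cast [Int.cast_abs]
        ring
      rw [h1]
      field_simp
    rw [Finset.sum_congr rfl e, ← Finset.sum_div, ← hK, pow_two]
    field_simp
  rw [hRHS, le_div_iff₀ (by positivity)]
  calc ‖S‖ ^ 2 * (Q:ℝ)^2 = ((Q:ℝ))^2 * ‖S‖ ^ 2 := by ring
    _ ≤ ((Q:ℝ) + (B - A)) * K := hQ3
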